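/- arXiv:math/9812153 — 3 statements merged into one kernel-verified Lean document; each statement's English description precedes it below -/
import Mathlib

section
/- Let π be a skew-symmetric bivector field on E, let a ≤ b, let α be a continuous cotangent path over a continuous curve γ on [a,b] which is a loop, i.e. γ(a) = γ(b), and let f : E → ℝ be continuously differentiable. Then the integral along α of the Hamiltonian vector field X_f vanishes: ∫_{a}^{b} (α t)(π (γ t)(fderiv ℝ f (γ t))) dt = 0. Consequently the integral along a cotangent loop descends to a linear functional on the first Poisson cohomology (the quotient of Poisson vector fields by Hamiltonian ones). (Corollary to Proposition 3.1.) -/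
/-- **Corollary to Proposition 3.1, in a chart.** The integral of a Hamiltonian vector field
`X_f = π^#(df)` along a cotangent loop (`γ a = γ b`) vanishes; hence integration along a
cotangent loop descends to the first Poisson cohomology. -/
theorem integral_along_cotangent_loop_of_hamiltonian_eq_zero
    {E : Type*} [NormedAddCommGroup E] [NormedSpace ℝ E] [FiniteDimensional ℝ E]
    (π : E → ((E →L[ℝ] ℝ) →ₗ[ℝ] E))
    (hskew : ∀ (x : E) (ξ η : E →L[ℝ] ℝ), ξ (π x η) = - η (π x ξ))
    {a b : ℝ} (hab : a ≤ b)
    {α : ℝ → (E →L[ℝ] ℝ)} {γ : ℝ → E}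
    (hα : Continuous α) (hγ : Continuous γ)
    (hcot : ∀ t ∈ Set.Icc a b, HasDerivAt γ (π (γ t) (α t)) t)
    (hloop : γ a = γ b)
    (f : E → ℝ) (hf : ContDiff ℝ 1 f) :
    ∫ t in a..b, (α t) (π (γ t) (fderiv ℝ f (γ t))) = 0 := by
  set g : ℝ → ℝ := fun t => (α t) (π (γ t) (fderiv ℝ f (γ t))) with hg
  by_cases hI : IntervalIntegrable g MeasureTheory.volume a b
  · have hderiv : ∀ t ∈ Set.uIcc a b, HasDerivAt (f ∘ γ) (-(g t)) t := by
      intro t ht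
      rw [Set.uIcc_of_le hab] at ht
      have h1 : HasDerivAt (f ∘ γ) ((fderiv ℝ f (γ t)) (π (γ t) (α t))) t :=
        ((hf.differentiable one_ne_zero (γ t)).hasFDerivAt).comp_hasDerivAt t (hcot t ht)
      have h2 : (fderiv ℝ f (γ t)) (π (γ t) (α t)) = -(g t) := by
        rw [hskew (γ t) (fderiv ℝ f (γ t)) (α t)]
      rwa [h2] at h1
    have := intervalIntegral.integral_eq_sub_of_hasDerivAt hderiv hI.neg
    simp only [Function.comp] at this
    rw [hloop, sub_self] at this
    rw [intervalIntegral.integral_neg] at this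
    linarith
  · exact intervalIntegral.integral_undef hI
end

section
/- Let n be a natural number, a ≤ b real numbers, and Φ, A : ℝ → Matrix (Fin n) (Fin n) ℝ with A continuous on [a,b] and Φ having derivative A(t) * Φ(t) at every t ∈ [a,b]. Then det(Φ b) = det(Φ a) * exp(∫_{a}^{b} trace(A t) dt). (Liouville's theorem for linear time-dependent systems, equation (13) of the paper in matrix form.) -/
attribute [local instance] Matrix.frobeniusNormedAddCommGroup Matrix.frobeniusNormedSpace

open Matrix


/-- Determinant as a continuous multilinear map on the rows. -/
noncomputable def detCML (n : ℕ) :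
    ContinuousMultilinearMap ℝ (fun _ : Fin n => (Fin n → ℝ)) ℝ :=
  MultilinearMap.mkContinuous
    (Matrix.detRowAlternating : AlternatingMap ℝ (Fin n → ℝ) ℝ (Fin n)).toMultilinearMap
    (n.factorial : ℝ) (by
      intro m
      have hdet : (Matrix.det m : ℝ) =
          ∑ σ : Equiv.Perm (Fin n), (Equiv.Perm.sign σ : ℤ) • ∏ i, m (σ i) i :=
        Matrix.det_apply m
      show ‖Matrix.det m‖ ≤ _
      rw [hdet]
      calc ‖∑ σ : Equiv.Perm (Fin n), (Equiv.Perm.sign σ : ℤ) • ∏ i, m (σ i) i‖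
          ≤ ∑ σ : Equiv.Perm (Fin n), ‖(Equiv.Perm.sign σ : ℤ) • ∏ i, m (σ i) i‖ :=
            norm_sum_le _ _
        _ ≤ ∑ σ : Equiv.Perm (Fin n), ∏ i, ‖m i‖ := by
            refine Finset.sum_le_sum fun σ _ => ?_
            rw [zsmul_eq_mul]
            rw [← Equiv.prod_comp σ (fun i => ‖m i‖)]
            have h1 : ‖((Equiv.Perm.sign σ : ℤ) : ℝ) * ∏ i, m (σ i) i‖
                = ∏ i, ‖m (σ i) i‖ := by
              rw [norm_mul, norm_prod]
              have : ‖((Equiv.Perm.sign σ : ℤ) : ℝ)‖ = 1 := by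
                rcases Int.units_eq_one_or (Equiv.Perm.sign σ) with h | h <;> simp [h]
              rw [this, one_mul]
            rw [h1]
            exact Finset.prod_le_prod (fun i _ => norm_nonneg _)
              (fun i _ => norm_le_pi_norm (m (σ i)) i)
        _ = (n.factorial : ℝ) * ∏ i, ‖m i‖ := by
            rw [Finset.sum_const, Finset.card_univ, Fintype.card_perm, nsmul_eq_mul,
              Fintype.card_fin])

@[simp] lemma detCML_apply {n : ℕ} (m : Fin n → Fin n → ℝ) :
    detCML n m = Matrix.det (Matrix.of m) := by
  simp [detCML, MultilinearMap.coe_mkContinuous]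
  rfl

/-- Jacobi's formula specialised: derivative of `t ↦ det (Φ t)`. -/
lemma hasDerivAt_det' {n : ℕ} {Φ : ℝ → Matrix (Fin n) (Fin n) ℝ}
    {Φ' : Matrix (Fin n) (Fin n) ℝ} {t : ℝ} (h : HasDerivAt Φ Φ' t) :
    HasDerivAt (fun s => (Φ s).det)
      (∑ i, (Matrix.updateRow (Φ t) i (Φ' i)).det) t := by
  classical
  let eL : Matrix (Fin n) (Fin n) ℝ ≃ₗ[ℝ] (Fin n → Fin n → ℝ) :=
    { Matrix.of.symm with map_add' := fun _ _ => rfl, map_smul' := fun _ _ => rfl }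
  let e : Matrix (Fin n) (Fin n) ℝ ≃L[ℝ] (Fin n → Fin n → ℝ) :=
    LinearEquiv.toContinuousLinearEquiv eL
  have h1 : HasDerivAt (fun s => e (Φ s)) (e Φ') t :=
    e.toContinuousLinearMap.hasFDerivAt.comp_hasDerivAt t h
  have h2 : HasFDerivAt (detCML n) ((detCML n).linearDeriv (e (Φ t))) (e (Φ t)) :=
    ContinuousMultilinearMap.hasFDerivAt _ _
  have h3 : HasDerivAt (fun s => detCML n (e (Φ s)))
      ((detCML n).linearDeriv (e (Φ t)) (e Φ')) t := h2.comp_hasDerivAt t h1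
  rw [ContinuousMultilinearMap.linearDeriv_apply] at h3
  convert h3 using 2
  · exact (detCML_apply (e (Φ _))).symm
  · exact (detCML_apply (Function.update (e (Φ t)) _ (e Φ' _))).symm

lemma sum_det_updateRow_mul {n : ℕ} (B M : Matrix (Fin n) (Fin n) ℝ) :
    ∑ i, (Matrix.updateRow M i ((B * M) i)).det = B.trace * M.det := by
  have hrow : ∀ i, (B * M) i = ∑ j, B i j • M j := by
    intro i
    funext k
    simp [Matrix.mul_apply, Finset.sum_apply]
  have : ∀ i, (Matrix.updateRow M i ((B * M) i)).det = B i i * M.det := by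
    intro i
    rw [hrow i, Matrix.det_updateRow_sum M i (fun j => B i j), smul_eq_mul]
  simp only [this, ← Finset.sum_mul, Matrix.trace, Matrix.diag]


lemma scalar_ode {a b : ℝ} (hab : a ≤ b) (W c : ℝ → ℝ)
    (hc : ContinuousOn c (Set.Icc a b))
    (hW : ∀ t ∈ Set.Icc a b, HasDerivAt W (c t * W t) t) :
    W b = W a * Real.exp (∫ t in a..b, c t) := by
  set F : ℝ → ℝ := fun t => ∫ s in a..t, c s with hFdef
  have hcint : ∀ t ∈ Set.Icc a b, IntervalIntegrable c MeasureTheory.volume a t := by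
    intro t ht
    exact (hc.mono (Set.Icc_subset_Icc le_rfl ht.2)).intervalIntegrable_of_Icc ht.1
  have hIccmem : ∀ t ∈ Set.Ico a b, Set.Icc a b ∈ nhdsWithin t (Set.Ioi t) := fun t ht =>
    Filter.mem_of_superset (Ioo_mem_nhdsGT_of_mem ⟨le_rfl, ht.2⟩)
      (Set.Subset.trans Set.Ioo_subset_Icc_self (Set.Icc_subset_Icc ht.1 le_rfl))
  have hFderiv : ∀ t ∈ Set.Ico a b, HasDerivWithinAt F (c t) (Set.Ici t) t := by
    intro t ht
    refine intervalIntegral.integral_hasDerivWithinAt_right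
      (hcint t ⟨ht.1, ht.2.le⟩) ⟨Set.Icc a b, hIccmem t ht, ?_⟩ ?_
    · exact (hc.aestronglyMeasurable measurableSet_Icc)
    · exact (hc t ⟨ht.1, ht.2.le⟩).mono_of_mem_nhdsWithin (hIccmem t ht)
  -- continuity of F on Icc
  have hFcont : ContinuousOn F (Set.Icc a b) := by
    have h := intervalIntegral.continuousOn_primitive_interval
      (f := c) (μ := MeasureTheory.volume) (a := a) (b := b)
      (by rw [Set.uIcc_of_le hab]; exact hc.integrableOn_Icc)
    rwa [Set.uIcc_of_le hab] at h
  -- the auxiliary function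
  set g : ℝ → ℝ := fun t => W t * Real.exp (-F t) with hgdef
  have hWcont : ContinuousOn W (Set.Icc a b) := fun t ht =>
    (hW t ht).continuousAt.continuousWithinAt
  have hgcont : ContinuousOn g (Set.Icc a b) :=
    hWcont.mul ((Real.continuous_exp.comp_continuousOn hFcont.neg))
  have hgderiv : ∀ t ∈ Set.Ico a b, HasDerivWithinAt g 0 (Set.Ici t) t := by
    intro t ht
    have h1 : HasDerivWithinAt W (c t * W t) (Set.Ici t) t :=
      (hW t ⟨ht.1, ht.2.le⟩).hasDerivWithinAt
    have h2 : HasDerivWithinAt (fun s => Real.exp (-F s))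
        (Real.exp (-F t) * -c t) (Set.Ici t) t := ((hFderiv t ht).neg).exp
    have : HasDerivWithinAt (fun y => W y * Real.exp (-F y))
        (c t * W t * Real.exp (-F t) + W t * (Real.exp (-F t) * -c t)) (Set.Ici t) t :=
      h1.mul h2
    convert this using 1
    ring
  have hconst : g b = g a := by
    have := constant_of_has_deriv_right_zero hgcont hgderiv b (Set.right_mem_Icc.2 hab)
    exact this
  have hFa : F a = 0 := by simp [hFdef]
  have : W b * Real.exp (-F b) = W a := by
    simpa [hgdef, hFa] using hconst
  have hW' : W b = W a * Real.exp (F b) := by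
    have := congrArg (fun x => x * Real.exp (F b)) this
    simpa [mul_assoc, ← Real.exp_add] using this
  simpa [hFdef] using hW'

/-- **Liouville's theorem for linear time-dependent systems** (equation (13) of the paper in
matrix form): if `Φ' = A(t) Φ` on `[a,b]` with `A` continuous on `[a,b]`, then
`det (Φ b) = det (Φ a) * exp (∫ₐᵇ trace (A t) dt)`. -/
theorem det_fundamental_solution_eq_exp_integral_trace
    {n : ℕ} {a b : ℝ} (hab : a ≤ b) (Φ A : ℝ → Matrix (Fin n) (Fin n) ℝ)
    (hA : ContinuousOn A (Set.Icc a b))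
    (hΦ : ∀ t ∈ Set.Icc a b, HasDerivAt Φ (A t * Φ t) t) :
    (Φ b).det = (Φ a).det * Real.exp (∫ t in a..b, (A t).trace) := by
  have htrace : ContinuousOn (fun t => (A t).trace) (Set.Icc a b) :=
    ((Matrix.traceLinearMap (Fin n) ℝ ℝ).continuous_of_finiteDimensional).comp_continuousOn hA
  refine scalar_ode hab (fun t => (Φ t).det) (fun t => (A t).trace) htrace ?_
  intro t ht
  have h := hasDerivAt_det' (hΦ t ht)
  rwa [sum_det_updateRow_mul (A t) (Φ t)] at h
end

section
/- Let E be a finite-dimensional real normed vector space, a ≤ b, and w : ℝ → E → E a time-dependent vector field such that each w(t) is differentiable. Let γ : ℝ → E be an integral curve of w on [a,b], i.e. γ has derivative w(t)(γ(t)) at every t ∈ [a,b]. Let Φ : ℝ → (E →L[ℝ] E) satisfy Φ(a) = id and the variational equation: Φ has derivative (fderiv ℝ (w t) (γ t)).comp (Φ t) at every t ∈ [a,b], and assume t ↦ fderiv ℝ (w t) (γ t) is continuous on [a,b]. Then det(Φ b) = exp(∫_{a}^{b} trace(fderiv ℝ (w t) (γ t)) dt). (Liouville's theorem along an integral curve,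 equation (13), with respect to the translation-invariant volume; the divergence of a vector field with respect to this volume is the trace of its derivative.) -/
open Matrix Finset

/-- Jacobi-type identity: sum of determinants with one row replaced. -/
theorem sum_det_updateRow_eq {n : Type*} [DecidableEq n] [Fintype n]
    (A H : Matrix n n ℝ) :
    ∑ i, (A.updateRow i (H i)).det = Matrix.trace (H * adjugate A) := by
  have key : ∀ i, (A.updateRow i (H i)).det = (H * adjugate A) i i := by
    intro i
    rw [← cramer_transpose_apply]
    have hH : H i = ∑ k, H i k • (Pi.single k 1 : n → ℝ) := by
      ext j
      simp [Pi.single_apply, eq_comm]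
    rw [hH, map_sum (Matrix.cramer Aᵀ) (fun k => H i k • (Pi.single k 1 : n → ℝ))
      Finset.univ]
    simp only [LinearMap.map_smul, Finset.sum_apply, Pi.smul_apply]
    rw [Matrix.mul_apply]
    refine Finset.sum_congr rfl fun k _ => ?_
    have : adjugate A k i = cramer Aᵀ (Pi.single k 1) i := by
      rw [adjugate_def]; rfl
    rw [this]
    simp [smul_eq_mul]
  simp only [key, Matrix.trace]
  rfl

theorem sum_det_updateRow_mul_s5 {n : Type*} [DecidableEq n] [Fintype n]
    (A B : Matrix n n ℝ) :
    ∑ i, (A.updateRow i ((B * A) i)).det = A.det * Matrix.trace B := by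
  rw [sum_det_updateRow_eq, Matrix.mul_assoc, mul_adjugate, Matrix.trace_mul_comm]
  simp [Matrix.trace_smul, smul_eq_mul, mul_comm]

theorem hasDerivAt_matrix_det {n : Type*} [DecidableEq n] [Fintype n]
    {M : ℝ → Matrix n n ℝ} {M' : Matrix n n ℝ} {x : ℝ}
    (h : ∀ i j, HasDerivAt (fun t => M t i j) (M' i j) x) :
    HasDerivAt (fun t => (M t).det)
      (∑ i, ((M x).updateRow i (M' i)).det) x := by
  have expand : ∀ t, (M t).det =
      ∑ σ : Equiv.Perm n, (Equiv.Perm.sign σ : ℝ) * ∏ i, M t (σ i) i := by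
    intro t; rw [Matrix.det_apply']
  have key : HasDerivAt (fun t => ∑ σ : Equiv.Perm n,
        (Equiv.Perm.sign σ : ℝ) * ∏ i, M t (σ i) i)
      (∑ σ : Equiv.Perm n, (Equiv.Perm.sign σ : ℝ) *
        ∑ i, (∏ j ∈ univ.erase i, M x (σ j) j) * M' (σ i) i) x := by
    apply HasDerivAt.fun_sum
    intro σ _
    have := (HasDerivAt.fun_finsetProd (u := (univ : Finset n))
        (f := fun i t => M t (σ i) i) (f' := fun i => M' (σ i) i)
        (fun i _ => h (σ i) i)).const_mul ((Equiv.Perm.sign σ : ℝ))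
    simpa [smul_eq_mul, mul_comm] using this
  have eq2 : (∑ i, ((M x).updateRow i (M' i)).det)
      = ∑ σ : Equiv.Perm n, (Equiv.Perm.sign σ : ℝ) *
        ∑ i, (∏ j ∈ univ.erase i, M x (σ j) j) * M' (σ i) i := by
    have dexp : ∀ i, ((M x).updateRow i (M' i)).det
        = ∑ σ : Equiv.Perm n, (Equiv.Perm.sign σ : ℝ) *
            ∏ j, ((M x).updateRow i (M' i)) (σ j) j := by
      intro i; rw [Matrix.det_apply']
    simp_rw [dexp]
    rw [Finset.sum_comm]
    refine Finset.sum_congr rfl fun σ _ => ?_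
    rw [← Finset.mul_sum]
    congr 1
    rw [← Equiv.sum_comp σ (fun r => ∏ j, ((M x).updateRow r (M' r)) (σ j) j)]
    refine Finset.sum_congr rfl fun i _ => ?_
    rw [← Finset.mul_prod_erase univ _ (Finset.mem_univ i), Matrix.updateRow_self,
      mul_comm]
    congr 1
    refine Finset.prod_congr rfl fun j hj => ?_
    exact congrFun
      (Matrix.updateRow_ne fun hji => (Finset.mem_erase.mp hj).1 (σ.injective hji)) j
  rw [show (fun t => (M t).det) = fun t => ∑ σ : Equiv.Perm n,
      (Equiv.Perm.sign σ : ℝ) * ∏ i, M t (σ i) i from funext expand, eq2]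
  exact key



/-- **Liouville's theorem along an integral curve** (equation (13) of the paper, with respect
to the translation-invariant volume): if `γ` is an integral curve of the time-dependent
vector field `w` on `[a,b]` and `Φ` is the linearization of the flow along `γ`, i.e. `Φ`
solves the variational equation `Φ' = Dw_t(γ t) ∘ Φ` with `Φ a = id`, then
`det (Φ b) = exp (∫ₐᵇ trace (Dw_t (γ t)) dt)`; the divergence of `w t` with respect to the
translation-invariant volume is the trace of its derivative. -/
theorem det_linearized_flow_eq_exp_integral_div
    {E : Type*} [NormedAddCommGroup E] [NormedSpace ℝ E] [FiniteDimensional ℝ E]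
    {a b : ℝ} (hab : a ≤ b) (w : ℝ → E → E)
    (hw : ∀ t, Differentiable ℝ (w t))
    (γ : ℝ → E) (hγ : ∀ t ∈ Set.Icc a b, HasDerivAt γ (w t (γ t)) t)
    (Φ : ℝ → (E →L[ℝ] E)) (hΦa : Φ a = ContinuousLinearMap.id ℝ E)
    (hΦ : ∀ t ∈ Set.Icc a b, HasDerivAt Φ ((fderiv ℝ (w t) (γ t)).comp (Φ t)) t)
    (hcont : ContinuousOn (fun t => fderiv ℝ (w t) (γ t)) (Set.Icc a b)) :
    LinearMap.det ((Φ b : E →L[ℝ] E) : E →ₗ[ℝ] E)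
      = Real.exp (∫ t in a..b,
          LinearMap.trace ℝ E ((fderiv ℝ (w t) (γ t) : E →L[ℝ] E) : E →ₗ[ℝ] E)) := by
  classical
  set d := Module.finrank ℝ E with hd
  let bE : Module.Basis (Fin d) ℝ E := Module.finBasis ℝ E
  let ℓ : (E →L[ℝ] E) →ₗ[ℝ] Matrix (Fin d) (Fin d) ℝ :=
    (LinearMap.toMatrix bE bE).toLinearMap ∘ₗ ContinuousLinearMap.coeLM ℝ
  let M : ℝ → Matrix (Fin d) (Fin d) ℝ := fun t => ℓ (Φ t)
  let B : ℝ → Matrix (Fin d) (Fin d) ℝ := fun t => ℓ (fderiv ℝ (w t) (γ t))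
  have hcomp : ∀ x, ℓ ((fderiv ℝ (w x) (γ x)).comp (Φ x)) = B x * M x := by
    intro x
    show LinearMap.toMatrix bE bE
        ((((fderiv ℝ (w x) (γ x)).comp (Φ x) : E →L[ℝ] E)) : E →ₗ[ℝ] E) = B x * M x
    rw [ContinuousLinearMap.toLinearMap_comp, LinearMap.toMatrix_comp bE bE bE]
    rfl
  -- entrywise derivatives of M
  have hMd : ∀ x ∈ Set.Icc a b, ∀ i j,
      HasDerivAt (fun t => M t i j) ((B x * M x) i j) x := by
    intro x hx i j
    let e : (E →L[ℝ] E) →ₗ[ℝ] ℝ :=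
      (LinearMap.proj j) ∘ₗ (LinearMap.proj i) ∘ₗ ℓ
    have he : HasDerivAt (fun t => e (Φ t))
        (e ((fderiv ℝ (w x) (γ x)).comp (Φ x))) x :=
      (LinearMap.toContinuousLinearMap e).hasFDerivAt.comp_hasDerivAt x (hΦ x hx)
    have : e ((fderiv ℝ (w x) (γ x)).comp (Φ x)) = (B x * M x) i j := by
      show ℓ _ i j = _
      rw [hcomp x]
    rw [this] at he
    exact he
  let g : ℝ → ℝ := fun t => (M t).det
  let τ : ℝ → ℝ := fun t => Matrix.trace (B t)
  have hg : ∀ x ∈ Set.Icc a b, HasDerivAt g (τ x * g x) x := by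
    intro x hx
    have h1 := hasDerivAt_matrix_det (hMd x hx)
    rw [sum_det_updateRow_mul_s5 (M x) (B x)] at h1
    simpa [g, τ, mul_comm] using h1
  -- τ is the trace integrand
  have htr : ∀ t, τ t
      = LinearMap.trace ℝ E ((fderiv ℝ (w t) (γ t) : E →L[ℝ] E) : E →ₗ[ℝ] E) :=
    fun t => (LinearMap.trace_eq_matrix_trace ℝ bE _).symm
  -- continuity of τ on [a, b]
  have hτcont : ContinuousOn τ (Set.Icc a b) := by
    have hT : Continuous fun f : E →L[ℝ] E => Matrix.trace (ℓ f) :=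
      LinearMap.continuous_of_finiteDimensional
        ((Matrix.traceLinearMap (Fin d) ℝ ℝ) ∘ₗ ℓ)
    exact hT.comp_continuousOn hcont
  -- clamp to [a, b] and integrate
  let c : ℝ → ℝ := fun t => max a (min t b)
  have hc : Continuous c := continuous_const.max (continuous_id.min continuous_const)
  have hcmem : ∀ t, c t ∈ Set.Icc a b :=
    fun t => ⟨le_max_left _ _, max_le hab (min_le_right _ _)⟩
  have hceq : ∀ t ∈ Set.Icc a b, c t = t := by
    intro t ht
    simp only [c]
    rw [min_eq_left ht.2, max_eq_right ht.1]
  let τ' : ℝ → ℝ := fun t => τ (c t)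
  have hτ' : Continuous τ' := hτcont.comp_continuous hc hcmem
  let F : ℝ → ℝ := fun u => ∫ s in a..u, τ' s
  have hF : ∀ u, HasDerivAt F (τ' u) u :=
    fun u => (hτ'.integral_hasStrictDerivAt a u).hasDerivAt
  let h : ℝ → ℝ := fun t => g t * Real.exp (-F t)
  have hh : ∀ x ∈ Set.Icc a b, HasDerivAt h 0 x := by
    intro x hx
    have hE : HasDerivAt (fun t => Real.exp (-F t))
        (Real.exp (-F x) * -τ' x) x := ((hF x).neg).exp
    have h2 := (hg x hx).mul hE
    have hτx : τ' x = τ x := by simp only [τ']; rw [hceq x hx]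
    rw [hτx] at h2
    have e0 : τ x * g x * Real.exp (-F x) + g x * (Real.exp (-F x) * -τ x) = 0 := by ring
    rw [e0] at h2
    exact h2
  have hconst := constant_of_has_deriv_right_zero
    (f := h) (a := a) (b := b)
    (fun x hx => ((hh x hx).continuousAt).continuousWithinAt)
    (fun x hx => (hh x (Set.Ico_subset_Icc_self hx)).hasDerivWithinAt)
  have hhb : h b = h a := hconst b (Set.right_mem_Icc.mpr hab)
  have hMa : M a = 1 := by
    simp only [M, hΦa]
    show LinearMap.toMatrix bE bE ((ContinuousLinearMap.id ℝ E : E →L[ℝ] E) : E →ₗ[ℝ] E) = 1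
    rw [ContinuousLinearMap.coe_id, LinearMap.toMatrix_id]
  have hha : h a = 1 := by
    simp only [h, F, g, hMa, intervalIntegral.integral_same, neg_zero, Real.exp_zero,
      Matrix.det_one, one_mul]
  have hgb : g b = Real.exp (F b) := by
    rw [hha] at hhb
    calc g b = g b * (Real.exp (-F b) * Real.exp (F b)) := by
          rw [← Real.exp_add, neg_add_cancel, Real.exp_zero, mul_one]
      _ = h b * Real.exp (F b) := by simp only [h]; ring
      _ = Real.exp (F b) := by rw [hhb, one_mul]
  have hdet : LinearMap.det ((Φ b : E →L[ℝ] E) : E →ₗ[ℝ] E) = g b :=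
    (LinearMap.det_toMatrix bE _).symm
  have hint : (∫ t in a..b,
      LinearMap.trace ℝ E ((fderiv ℝ (w t) (γ t) : E →L[ℝ] E) : E →ₗ[ℝ] E)) = F b := by
    apply intervalIntegral.integral_congr
    intro t ht
    rw [Set.uIcc_of_le hab] at ht
    show _ = τ' t
    simp only [τ']
    rw [hceq t ht, htr t]
  rw [hdet, hint, hgb]
end
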